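/- If a colluding agent x ∈ C is proper for a target t with forwarding number j ≥ 2, and σ(1) = x, σ(2), …, σ(j) is a witness for x (for target t), then the colluding agent σ(2) has forwarding number j − 1 for t. -/

import Mathlib

open SimpleGraph

namespace Intercept

variable {V : Type*}

/-- The perceived-distance vectors after `s` rounds of the synchronization protocol.
Colluding agents (members of `C`) always broadcast `β`; honest agents start with
`0`/`∞` and update by the distance-vector rule. -/
noncomputable def perceived [Fintype V] [DecidableEq V] (G : SimpleGraph V)
    (C : Finset V) (β : V → V → ℕ∞) : ℕ → V → V → ℕ∞
  | 0 => fun i j => if i ∈ C then β i j else if i = j then 0 else ⊤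
  | s + 1 => fun i j =>
      if i ∈ C then β i j
      else min (perceived G C β s i j)
        (1 + ⨅ k ∈ G.neighborSet i, perceived G C β s k j)

/-- The stationary perceived distances `ρ = ρ^n`. -/
noncomputable def rho [Fintype V] [DecidableEq V] (G : SimpleGraph V)
    (C : Finset V) (β : V → V → ℕ∞) : V → V → ℕ∞ :=
  perceived G C β (Fintype.card V)

/-- `k ∈ b(i,t)`:  `k` is a neighbor of `i` minimizing the (stationary) perceived
distance `ρ(·,t)` among all neighbors of `i`; only defined (satisfiable) for `i ≠ t`. -/
def inForwardSet (G : SimpleGraph V) (ρ : V → V → ℕ∞) (i t k : V) : Prop :=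
  i ≠ t ∧ G.Adj i k ∧ ∀ k', G.Adj i k' → ρ k t ≤ ρ k' t

/-- A corresponding path from `s` to `t`: a walk in `G` such that every honest vertex
forwards to a member of its forwarding set `b(·,t)`. -/
def IsCorrPath [Fintype V] [DecidableEq V] (G : SimpleGraph V) (C : Finset V)
    (β : V → V → ℕ∞) (s t : V) (ℓ : ℕ) (v : ℕ → V) : Prop :=
  v 0 = s ∧ v ℓ = t ∧ (∀ i < ℓ, G.Adj (v i) (v (i + 1))) ∧
    ∀ i < ℓ, v i ∉ C → inForwardSet G (rho G C β) (v i) t (v (i + 1))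

/-- A broadcast is admissible if between every ordered pair of distinct vertices
there is a corresponding path. -/
def Admissible [Fintype V] [DecidableEq V] (G : SimpleGraph V) (C : Finset V)
    (β : V → V → ℕ∞) : Prop :=
  ∀ s t : V, s ≠ t → ∃ ℓ v, IsCorrPath G C β s t ℓ v

/-- The pair `(s,t)` is captured if every corresponding path from `s` to `t`
contains a colluding vertex. -/
def Captured [Fintype V] [DecidableEq V] (G : SimpleGraph V) (C : Finset V)
    (β : V → V → ℕ∞) (s t : V) : Prop :=
  ∀ ℓ v, IsCorrPath G C β s t ℓ v → ∃ i ≤ ℓ, v i ∈ C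

/-- `N(C,β)`: the number of captured ordered pairs of distinct vertices. -/
noncomputable def numCaptured [Fintype V] [DecidableEq V] (G : SimpleGraph V)
    (C : Finset V) (β : V → V → ℕ∞) : ℕ :=
  Set.ncard {p : V × V | p.1 ≠ p.2 ∧ Captured G C β p.1 p.2}

/-- The `j`-th colluding distance `d_j(x,y)`: the least total length of a sequence of
`j` distinct colluding vertices starting at `x` and ending at `y`, measured by summing
the graph distances of consecutive members (`⊤` if no such sequence exists). -/
noncomputable def collDist (G : SimpleGraph V) (C : Finset V) (j : ℕ) (x y : V) : ℕ∞ :=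
  ⨅ (σ : ℕ → V) (_ : σ 0 = x ∧ σ (j - 1) = y ∧ (∀ i < j, σ i ∈ C) ∧
      ∀ a < j, ∀ b < j, σ a = σ b → a = b),
    ∑ i ∈ Finset.range (j - 1), (G.dist (σ i) (σ (i + 1)) : ℕ∞)

/-- `ρ'(x,t) = max (d(x,t) - 2) 1`. -/
noncomputable def rhoPrime (G : SimpleGraph V) (x t : V) : ℕ∞ :=
  max ((G.dist x t : ℕ∞) - 2) 1

/-- `ρ''(x,t)`: the minimum over colluders `y` and `1 ≤ j ≤ |C|` of
`d_j(x,y) - 2(j-1) + ρ'(y,t)`. -/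
noncomputable def rhoPrime2 (G : SimpleGraph V) (C : Finset V) (x t : V) : ℕ∞ :=
  ⨅ y ∈ C, ⨅ j ∈ Finset.Icc 1 C.card,
    (collDist G C j x y - ((2 * (j - 1) : ℕ) : ℕ∞) + rhoPrime G y t)

/-- The optimal separated broadcast `ρ*(x,t) = min (ρ'(x,t)) (ρ''(x,t))`,
with `ρ*(x,x) = 0`. -/
noncomputable def rhoStar [DecidableEq V] (G : SimpleGraph V) (C : Finset V)
    (x t : V) : ℕ∞ :=
  if x = t then 0 else min (rhoPrime G x t) (rhoPrime2 G C x t)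

/-- A colluder `x` is proper for target `t` if `ρ*(x,t) < ρ'(x,t)`. -/
def Proper [DecidableEq V] (G : SimpleGraph V) (C : Finset V) (x t : V) : Prop :=
  rhoStar G C x t < rhoPrime G x t

open scoped Classical in
/-- The forwarding number of `x` for `t`: the least `j ≥ 1` such that
`ρ*(x,t) = d_j(x,y) - 2(j-1) + ρ'(y,t)` for some colluder `y`, improper
vertices being assigned forwarding number `1`. -/
noncomputable def fwdNum [DecidableEq V] (G : SimpleGraph V) (C : Finset V)
    (x t : V) : ℕ :=
  if Proper G C x t then
    sInf {j : ℕ | 1 ≤ j ∧ ∃ y ∈ C, rhoStar G C x t =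
      collDist G C j x y - ((2 * (j - 1) : ℕ) : ℕ∞) + rhoPrime G y t}
  else 1


section Helpers

variable {V : Type*}

private lemma enat_exists_eq_iInf {ι : Sort*} [Nonempty ι] (f : ι → ℕ∞) :
    ∃ i, (⨅ i, f i) = f i := by
  obtain ⟨a, ha, hmin⟩ := WellFounded.has_min
    (wellFounded_lt (α := ℕ∞)) (Set.range f) (Set.range_nonempty f)
  obtain ⟨i, rfl⟩ := ha
  exact ⟨i, le_antisymm (iInf_le f i) (le_iInf fun j => not_lt.1 (hmin _ ⟨j, rfl⟩))⟩

private lemma two_le_dist_of_sep {G : SimpleGraph V} (hG : G.Connected) {C : Finset V}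
    (hsep : ∀ x ∈ C, ∀ y ∈ C, ¬ G.Adj x y) {u v : V} (hu : u ∈ C) (hv : v ∈ C)
    (hne : u ≠ v) : 2 ≤ G.dist u v := by
  have h1 : 0 < G.dist u v := hG.pos_dist_of_ne hne
  have h2 : G.dist u v ≠ 1 := fun h => hsep u hu v hv (SimpleGraph.dist_eq_one_iff_adj.mp h)
  omega

/-- Validity of a sequence for `collDist`. -/
def Valid (C : Finset V) (j : ℕ) (x y : V) (τ : ℕ → V) : Prop :=
  τ 0 = x ∧ τ (j - 1) = y ∧ (∀ i < j, τ i ∈ C) ∧ ∀ a < j, ∀ b < j, τ a = τ b → a = b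

private lemma collDist_le_of_valid (G : SimpleGraph V) {C : Finset V} {j : ℕ} {x y : V}
    {τ : ℕ → V} (h : Valid C j x y τ) :
    collDist G C j x y ≤ ((∑ i ∈ Finset.range (j - 1), G.dist (τ i) (τ (i + 1)) : ℕ) : ℕ∞) := by
  rw [Nat.cast_sum]
  exact iInf₂_le τ h

private lemma collDist_exists [Nonempty V] (G : SimpleGraph V) {C : Finset V} {j : ℕ}
    {x y : V} (h : collDist G C j x y ≠ ⊤) :
    ∃ τ, Valid C j x y τ ∧
      ((∑ i ∈ Finset.range (j - 1), G.dist (τ i) (τ (i + 1)) : ℕ) : ℕ∞)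
        = collDist G C j x y := by
  obtain ⟨τ, hτ⟩ := enat_exists_eq_iInf
    (fun σ : ℕ → V => ⨅ (_ : Valid C j x y σ),
      ∑ i ∈ Finset.range (j - 1), (G.dist (σ i) (σ (i + 1)) : ℕ∞))
  have hc : collDist G C j x y = ⨅ (_ : Valid C j x y τ),
      ∑ i ∈ Finset.range (j - 1), (G.dist (τ i) (τ (i + 1)) : ℕ∞) := hτ
  by_cases hv : Valid C j x y τ
  · refine ⟨τ, hv, ?_⟩
    rw [hc, iInf_pos hv, Nat.cast_sum]
  · rw [hc, iInf_neg hv] at h; exact absurd rfl h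

private lemma prefix_sum_ge {G : SimpleGraph V} (hG : G.Connected) {C : Finset V}
    (hsep : ∀ x ∈ C, ∀ y ∈ C, ¬ G.Adj x y) {j : ℕ} {x y : V} {τ : ℕ → V}
    (h : Valid C j x y τ) {m : ℕ} (hm : m ≤ j - 1) :
    2 * m ≤ ∑ i ∈ Finset.range m, G.dist (τ i) (τ (i + 1)) := by
  calc 2 * m = ∑ _i ∈ Finset.range m, 2 := by
        rw [Finset.sum_const, Finset.card_range, smul_eq_mul, mul_comm]
    _ ≤ _ := by
        refine Finset.sum_le_sum fun i hi => ?_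
        rw [Finset.mem_range] at hi
        have hij : i + 1 < j := by omega
        exact two_le_dist_of_sep hG hsep (h.2.2.1 i (by omega)) (h.2.2.1 (i + 1) hij)
          (fun he => by have := h.2.2.2 i (by omega) (i + 1) hij he; omega)

private lemma le_collDist {G : SimpleGraph V} (hG : G.Connected) {C : Finset V}
    (hsep : ∀ x ∈ C, ∀ y ∈ C, ¬ G.Adj x y) (j : ℕ) (x y : V) :
    ((2 * (j - 1) : ℕ) : ℕ∞) ≤ collDist G C j x y := by
  refine le_iInf fun σ => le_iInf fun hσ => ?_
  rw [← Nat.cast_sum]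
  exact_mod_cast prefix_sum_ge hG hsep hσ le_rfl

private lemma valid_card_le {C : Finset V} {j : ℕ} {x y : V} {τ : ℕ → V}
    (h : Valid C j x y τ) : j ≤ C.card := by
  classical
  have := Finset.card_le_card_of_injOn (s := Finset.range j) (t := C) τ
    (fun i hi => h.2.2.1 i (Finset.mem_range.mp hi))
    (fun a ha b hb hab => h.2.2.2 a (Finset.mem_range.mp ha) b (Finset.mem_range.mp hb) hab)
  simpa using this

private lemma rhoPrime_eq (G : SimpleGraph V) (u t : V) :
    rhoPrime G u t = ((max (G.dist u t - 2) 1 : ℕ) : ℕ∞) := by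
  rw [rhoPrime]
  rw [show ((max (G.dist u t - 2) 1 : ℕ) : ℕ∞) = max ((G.dist u t - 2 : ℕ) : ℕ∞) ((1:ℕ):ℕ∞)
    from rfl, ENat.coe_sub]
  norm_num

private lemma rhoPrime_ne_top (G : SimpleGraph V) (u t : V) : rhoPrime G u t ≠ ⊤ := by
  rw [rhoPrime_eq]; exact ENat.coe_ne_top _

private lemma rhoStar_le_rhoPrime [DecidableEq V] {G : SimpleGraph V} {C : Finset V}
    {z t : V} (h : z ≠ t) : rhoStar G C z t ≤ rhoPrime G z t := by
  rw [rhoStar, if_neg h]; exact min_le_left _ _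

private lemma rhoStar_le_term [DecidableEq V] {G : SimpleGraph V} {C : Finset V} {z t y : V}
    {j : ℕ} (hzt : z ≠ t) (hy : y ∈ C) (hj : j ∈ Finset.Icc 1 C.card) :
    rhoStar G C z t ≤ collDist G C j z y - ((2 * (j - 1) : ℕ) : ℕ∞) + rhoPrime G y t := by
  rw [rhoStar, if_neg hzt]
  calc min (rhoPrime G z t) (rhoPrime2 G C z t) ≤ rhoPrime2 G C z t := min_le_right _ _
    _ ≤ _ := by rw [rhoPrime2]; exact (iInf₂_le y hy).trans (iInf₂_le j hj)

private lemma rhoPrime2_attained [Nonempty V] {G : SimpleGraph V} {C : Finset V} {z t : V}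
    (h : rhoPrime2 G C z t ≠ ⊤) :
    ∃ y ∈ C, ∃ j ∈ Finset.Icc 1 C.card,
      rhoPrime2 G C z t = collDist G C j z y - ((2 * (j - 1) : ℕ) : ℕ∞) + rhoPrime G y t := by
  obtain ⟨y0, hy0⟩ := enat_exists_eq_iInf (fun y : V => ⨅ (_ : y ∈ C),
    ⨅ j ∈ Finset.Icc 1 C.card,
      (collDist G C j z y - ((2 * (j - 1) : ℕ) : ℕ∞) + rhoPrime G y t))
  have h0 : rhoPrime2 G C z t = ⨅ (_ : y0 ∈ C), ⨅ j ∈ Finset.Icc 1 C.card,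
      (collDist G C j z y0 - ((2 * (j - 1) : ℕ) : ℕ∞) + rhoPrime G y0 t) := hy0
  by_cases hyC : y0 ∈ C
  · rw [iInf_pos hyC] at h0
    obtain ⟨j0, hj0⟩ := enat_exists_eq_iInf (fun j : ℕ => ⨅ (_ : j ∈ Finset.Icc 1 C.card),
      (collDist G C j z y0 - ((2 * (j - 1) : ℕ) : ℕ∞) + rhoPrime G y0 t))
    rw [hj0] at h0
    by_cases hji : j0 ∈ Finset.Icc 1 C.card
    · rw [iInf_pos hji] at h0
      exact ⟨y0, hyC, j0, hji, h0⟩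
    · rw [iInf_neg hji] at h0; exact absurd h0 h
  · rw [iInf_neg hyC] at h0; exact absurd h0 h

private lemma term_le_cast {G : SimpleGraph V} {C : Finset V} {n c : ℕ} {z' y' t : V}
    (h : collDist G C n z' y' ≤ (c : ℕ∞)) :
    collDist G C n z' y' - ((2 * (n - 1) : ℕ) : ℕ∞) + rhoPrime G y' t
      ≤ ((c - 2 * (n - 1) + max (G.dist y' t - 2) 1 : ℕ) : ℕ∞) := by
  rw [Nat.cast_add, ENat.coe_sub, rhoPrime_eq]
  exact add_le_add (tsub_le_tsub_right h _) le_rfl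

private lemma key_step [Nonempty V] {G : SimpleGraph V} (hG : G.Connected) {C : Finset V}
    (hsep : ∀ a ∈ C, ∀ b ∈ C, ¬ G.Adj a b) {x z y'' t : V} (hxC : x ∈ C) (hxz : x ≠ z)
    {m : ℕ} (hm1 : 1 ≤ m) (hmc : m ≤ C.card) {c : ℕ}
    (hcoll : collDist G C m z y'' = (c : ℕ∞)) :
    ∃ n, 1 ≤ n ∧ n ≤ m + 1 ∧ n ∈ Finset.Icc 1 C.card ∧
      collDist G C n x y'' - ((2 * (n - 1) : ℕ) : ℕ∞) + rhoPrime G y'' t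
        ≤ ((G.dist x z - 2 + (c - 2 * (m - 1)) + max (G.dist y'' t - 2) 1 : ℕ) : ℕ∞) := by
  obtain ⟨τ, hτ, hsum⟩ := collDist_exists G (by rw [hcoll]; exact ENat.coe_ne_top c)
  have hsumc : ∑ i ∈ Finset.range (m - 1), G.dist (τ i) (τ (i + 1)) = c := by
    have := hsum.trans hcoll
    exact_mod_cast this
  by_cases hex : ∃ p < m, τ p = x
  · -- x occurs in the sequence: use the suffix from x
    obtain ⟨p, hpm, hpx⟩ := hex
    have hp0 : p ≠ 0 := by
      intro h; subst h; rw [hτ.1] at hpx; exact hxz hpx.symm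
    refine ⟨m - p, by omega, by omega, Finset.mem_Icc.mpr ⟨by omega, by omega⟩, ?_⟩
    -- suffix validity
    have hval : Valid C (m - p) x y'' (fun i => τ (p + i)) := by
      refine ⟨by simpa using hpx, ?_, fun i hi => hτ.2.2.1 (p + i) (by omega),
        fun a ha b hb hab => ?_⟩
      · show τ (p + (m - p - 1)) = y''
        have e : p + (m - p - 1) = m - 1 := by omega
        rw [e, hτ.2.1]
      · have := hτ.2.2.2 (p + a) (by omega) (p + b) (by omega) hab; omega
    have hle := collDist_le_of_valid G hval
    -- split the total sum at p
    have hsplit : (∑ i ∈ Finset.range p, G.dist (τ i) (τ (i + 1)))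
        + ∑ i ∈ Finset.range (m - 1 - p), G.dist (τ (p + i)) (τ (p + i + 1)) = c := by
      rw [← hsumc]
      have e : m - 1 = p + (m - 1 - p) := by omega
      rw [e, Finset.sum_range_add]
      simp only [Nat.add_sub_cancel_left]
    have hpre : 2 * p ≤ ∑ i ∈ Finset.range p, G.dist (τ i) (τ (i + 1)) :=
      prefix_sum_ge hG hsep hτ (by omega)
    have hle' : collDist G C (m - p) x y''
        ≤ ((∑ i ∈ Finset.range (m - 1 - p), G.dist (τ (p + i)) (τ (p + i + 1)) : ℕ) : ℕ∞) := by
      have e : ∀ i, p + (i + 1) = p + i + 1 := fun i => by omega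
      have e2 : m - p - 1 = m - 1 - p := by omega
      simpa only [e, e2] using hle
    refine (term_le_cast hle').trans ?_
    refine Nat.cast_le.mpr ?_
    omega
  · -- x does not occur: prepend x
    push_neg at hex
    set υ : ℕ → V := fun i => if i = 0 then x else τ (i - 1) with hυ
    have hval : Valid C (m + 1) x y'' υ := by
      refine ⟨rfl, ?_, fun i hi => ?_, fun a ha b hb hab => ?_⟩
      · show υ (m + 1 - 1) = y''
        have e : m + 1 - 1 = m := rfl
        rw [e, hυ]
        simp only [if_neg (by omega : ¬ m = 0)]
        have e2 : m - 1 = m - 1 := rfl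
        exact hτ.2.1
      · rcases Nat.eq_zero_or_pos i with h0 | h0
        · subst h0; simpa [hυ] using hxC
        · simp only [hυ, if_neg (by omega : ¬ i = 0)]
          exact hτ.2.2.1 (i - 1) (by omega)
      · rcases Nat.eq_zero_or_pos a with ha0 | ha0 <;> rcases Nat.eq_zero_or_pos b with hb0 | hb0
        · omega
        · exfalso; subst ha0
          simp only [hυ, if_pos rfl, if_neg (by omega : ¬ b = 0)] at hab
          exact hex (b - 1) (by omega) hab.symm
        · exfalso; subst hb0
          simp only [hυ, if_pos rfl, if_neg (by omega : ¬ a = 0)] at hab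
          exact hex (a - 1) (by omega) hab
        · simp only [hυ, if_neg (by omega : ¬ a = 0), if_neg (by omega : ¬ b = 0)] at hab
          have := hτ.2.2.2 (a - 1) (by omega) (b - 1) (by omega) hab; omega
    refine ⟨m + 1, by omega, le_rfl,
      Finset.mem_Icc.mpr ⟨by omega, valid_card_le hval⟩, ?_⟩
    have hle := collDist_le_of_valid G hval
    have hsum2 : ∑ i ∈ Finset.range (m + 1 - 1), G.dist (υ i) (υ (i + 1))
        = G.dist x z + c := by
      have e : m + 1 - 1 = (m - 1) + 1 := by omega
      rw [e, Finset.sum_range_succ']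
      have e1 : ∀ i, G.dist (υ (i + 1)) (υ (i + 1 + 1)) = G.dist (τ i) (τ (i + 1)) := by
        intro i
        simp only [hυ, if_neg (by omega : ¬ i + 1 = 0), if_neg (by omega : ¬ i + 1 + 1 = 0)]
        norm_num
      have e0 : G.dist (υ 0) (υ (0 + 1)) = G.dist x z := by
        simp only [hυ, if_pos rfl, if_neg (by omega : ¬ (0:ℕ) + 1 = 0)]
        rw [show (0 + 1 - 1 : ℕ) = 0 from rfl, hτ.1]
      rw [e0]
      simp only [e1]
      rw [hsumc]
      omega
    have hle' : collDist G C (m + 1) x y'' ≤ ((G.dist x z + c : ℕ) : ℕ∞) := by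
      rw [← hsum2]; exact hle
    refine (term_le_cast hle').trans (Nat.cast_le.mpr ?_)
    omega

end Helpers
/-- If a colluding agent `x ∈ C` is proper for a target `t` with
forwarding number `j ≥ 2`, and `σ 0 = x, σ 1, …, σ (j-1) = y` is a witness for `x`
(an injective sequence of colluders attaining `d_j(x,y)` with
`ρ*(x,t) = d_j(x,y) - 2(j-1) + ρ'(y,t)`), then the colluding agent `σ 1` has
forwarding number `j - 1` for `t`. -/
theorem witness_forwarding_number [Fintype V] [DecidableEq V] (G : SimpleGraph V)
    (hG : G.Connected) (C : Finset V)
    (hsep : ∀ x ∈ C, ∀ y ∈ C, ¬ G.Adj x y)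
    (x : V) (hx : x ∈ C) (t : V)
    (hproper : Proper G C x t)
    (j : ℕ) (hj2 : 2 ≤ j) (hjfwd : fwdNum G C x t = j)
    (σ : ℕ → V) (y : V) (hy : y ∈ C)
    (hσ0 : σ 0 = x) (hσlast : σ (j - 1) = y)
    (hσC : ∀ i < j, σ i ∈ C)
    (hσinj : ∀ a < j, ∀ b < j, σ a = σ b → a = b)
    (hσmin : (∑ i ∈ Finset.range (j - 1), (G.dist (σ i) (σ (i + 1)) : ℕ∞))
      = collDist G C j x y)
    (hattain : rhoStar G C x t
      = collDist G C j x y - ((2 * (j - 1) : ℕ) : ℕ∞) + rhoPrime G y t) :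
    fwdNum G C (σ 1) t = j - 1 := by
  classical
  have _inst : Nonempty V := ⟨x⟩
  have hzC : σ 1 ∈ C := hσC 1 (by omega)
  have hxz : x ≠ σ 1 := by
    intro h
    have := hσinj 0 (by omega) 1 (by omega) (by rw [hσ0, ← h])
    omega
  have hwit : Valid C j x y σ := ⟨hσ0, hσlast, hσC, hσinj⟩
  have hjcard : j ≤ C.card := valid_card_le hwit
  set z : V := σ 1 with hzdef
  set D : ℕ := G.dist x z with hD
  have hD2 : 2 ≤ D := two_le_dist_of_sep hG hsep hx hzC hxz
  set Ry : ℕ := max (G.dist y t - 2) 1 with hRydef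
  have hRy : rhoPrime G y t = ((Ry : ℕ) : ℕ∞) := rhoPrime_eq G y t
  have hRy1 : 1 ≤ Ry := le_max_right _ _
  set Rz : ℕ := max (G.dist z t - 2) 1 with hRzdef
  have hRz : rhoPrime G z t = ((Rz : ℕ) : ℕ∞) := rhoPrime_eq G z t
  set T : ℕ := ∑ i ∈ Finset.range (j - 2), G.dist (σ (i + 1)) (σ (i + 1 + 1)) with hT
  have hsplit : ∑ i ∈ Finset.range (j - 1), G.dist (σ i) (σ (i + 1)) = T + D := by
    have e : j - 1 = (j - 2) + 1 := by omega
    rw [e, Finset.sum_range_succ', hσ0]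
  have hcollxy : collDist G C j x y = ((T + D : ℕ) : ℕ∞) := by
    rw [← hσmin, ← Nat.cast_sum, hsplit]
  have htail : Valid C (j - 1) z y (fun i => σ (i + 1)) := by
    refine ⟨rfl, ?_, fun i hi => hσC (i + 1) (by omega), fun a ha b hb hab => ?_⟩
    · show σ ((j - 1 - 1) + 1) = y
      have e : j - 1 - 1 + 1 = j - 1 := by omega
      rw [e, hσlast]
    · have := hσinj (a + 1) (by omega) (b + 1) (by omega) hab; omega
  have hcoll_tail_le : collDist G C (j - 1) z y ≤ (T : ℕ∞) := by
    have h := collDist_le_of_valid G htail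
    have e : j - 1 - 1 = j - 2 := by omega
    rw [e] at h
    exact h.trans (le_of_eq (by rw [hT]))
  obtain ⟨cJ, hcJ0⟩ := WithTop.ne_top_iff_exists.mp
    (hcoll_tail_le.trans_lt (ENat.coe_lt_top T)).ne
  have hcJ : (cJ : ℕ∞) = collDist G C (j - 1) z y := hcJ0
  have hcJT : cJ ≤ T := by
    rw [← hcJ] at hcoll_tail_le
    exact Nat.cast_le.mp hcoll_tail_le
  have hcJ2 : 2 * (j - 2) ≤ cJ := by
    have h := le_collDist hG hsep (j - 1) z y (C := C)
    rw [← hcJ] at h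
    have e : j - 1 - 1 = j - 2 := by omega
    rw [e] at h
    exact Nat.cast_le.mp h
  have hT2 : 2 * (j - 2) ≤ T := hcJ2.trans hcJT
  set A : ℕ∞ := collDist G C (j - 1) z y - ((2 * (j - 2) : ℕ) : ℕ∞) + rhoPrime G y t with hA
  have hAeq : A = ((cJ - 2 * (j - 2) + Ry : ℕ) : ℕ∞) := by
    rw [hA, ← hcJ, hRy, ← ENat.coe_sub, ← Nat.cast_add]
  have hstar_x : rhoStar G C x t = ((T + D - 2 * (j - 1) + Ry : ℕ) : ℕ∞) := by
    rw [hattain, hcollxy, hRy, ← ENat.coe_sub, ← Nat.cast_add]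
  have hxt : x ≠ t := by
    intro h
    have h0 : rhoStar G C x t = 0 := by rw [rhoStar, if_pos h]
    rw [hstar_x] at h0
    have h1 : T + D - 2 * (j - 1) + Ry = 0 := by exact_mod_cast h0
    omega
  have hzt : z ≠ t := by
    intro h
    have hdx : G.dist x t = D := by rw [← h]
    have hlt : rhoStar G C x t < rhoPrime G x t := hproper
    rw [hstar_x, rhoPrime_eq, hdx] at hlt
    have hlt' : T + D - 2 * (j - 1) + Ry < max (D - 2) 1 := by exact_mod_cast hlt
    have hmax : max (D - 2) 1 ≤ D - 1 := max_le (by omega) (by omega)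
    omega
  have hge : ((D - 2 + (cJ - 2 * (j - 2) + Ry) : ℕ) : ℕ∞) ≤ rhoStar G C x t := by
    rw [hstar_x]
    exact Nat.cast_le.mpr (by omega)
  have hpair : Valid C 2 x z (fun i => if i = 0 then x else z) := by
    refine ⟨rfl, rfl, fun i hi => ?_, fun a ha b hb hab => ?_⟩
    · dsimp only
      split
      · exact hx
      · exact hzC
    · have ha' : a = 0 ∨ a = 1 := by omega
      have hb' : b = 0 ∨ b = 1 := by omega
      rcases ha' with rfl | rfl <;> rcases hb' with rfl | rfl
      · rfl
      · exact absurd (by simpa using hab) hxz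
      · exact absurd (by simpa using hab.symm) hxz
      · rfl
  have hcoll2 : collDist G C 2 x z ≤ (D : ℕ∞) := by
    have h := collDist_le_of_valid G hpair
    refine h.trans (le_of_eq ?_)
    rw [show (2 - 1 : ℕ) = 1 from rfl, Finset.sum_range_one]
    norm_num [hD]
  rw [fwdNum, if_pos hproper] at hjfwd
  have hmem_S : ∀ n : ℕ, 1 ≤ n → ∀ y' ∈ C, (rhoStar G C x t =
      collDist G C n x y' - ((2 * (n - 1) : ℕ) : ℕ∞) + rhoPrime G y' t) → j ≤ n := by
    intro n hn y' hy' heq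
    rw [← hjfwd]
    exact Nat.sInf_le ⟨hn, y', hy', heq⟩
  have hstar_z_le : rhoStar G C z t ≤ A := by
    have hIcc : j - 1 ∈ Finset.Icc 1 C.card := Finset.mem_Icc.mpr ⟨by omega, by omega⟩
    have h := rhoStar_le_term hzt hy hIcc (G := G)
    have e : j - 1 - 1 = j - 2 := by omega
    rw [e] at h
    exact h
  have hstar_z : rhoStar G C z t = A := by
    refine le_antisymm hstar_z_le (not_lt.1 fun hlt => ?_)
    have hminz : rhoStar G C z t = min (rhoPrime G z t) (rhoPrime2 G C z t) := by
      rw [rhoStar, if_neg hzt]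
    have h7 : ((D - 2 : ℕ) : ℕ∞) + A ≤ rhoStar G C x t := by
      rw [hAeq, ← Nat.cast_add]; exact hge
    rcases le_or_gt (rhoPrime G z t) (rhoPrime2 G C z t) with hc | hc
    · have hz' : rhoStar G C z t = ((Rz : ℕ) : ℕ∞) := by rw [hminz, min_eq_left hc, hRz]
      have h1 : rhoStar G C x t ≤ ((D - 2 * (2 - 1) + Rz : ℕ) : ℕ∞) := by
        refine (rhoStar_le_term (j := 2) hxt hzC (Finset.mem_Icc.mpr ⟨by omega, by omega⟩)).trans ?_
        have h2 := term_le_cast (t := t) hcoll2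
        rw [← hRzdef] at h2
        exact h2
      have h2 : ((D - 2 : ℕ) : ℕ∞) + rhoStar G C z t < ((D - 2 : ℕ) : ℕ∞) + A :=
        WithTop.add_lt_add_left (ENat.coe_ne_top _) hlt
      rw [hz', ← Nat.cast_add] at h2
      exact absurd ((h1.trans_lt (lt_of_le_of_lt (Nat.cast_le.mpr (by omega)) h2)).trans_le h7)
        (lt_irrefl _)
    · have hzeq : rhoStar G C z t = rhoPrime2 G C z t := by rw [hminz, min_eq_right hc.le]
      have hne2 : rhoPrime2 G C z t ≠ ⊤ :=
        ((hc.trans_le hRz.le).trans (ENat.coe_lt_top Rz)).ne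
      obtain ⟨y'', hy''C, m, hmIcc, heqm⟩ := rhoPrime2_attained hne2
      rw [← hzeq] at heqm
      have hfinz : rhoStar G C z t ≠ ⊤ := ne_top_of_lt hlt
      have hfin : collDist G C m z y'' ≠ ⊤ := by
        intro htop
        rw [htop, ENat.top_sub_coe, top_add] at heqm
        exact hfinz heqm
      obtain ⟨c'', hc''0⟩ := WithTop.ne_top_iff_exists.mp hfin
      have hc'' : (c'' : ℕ∞) = collDist G C m z y'' := hc''0
      rcases Finset.mem_Icc.mp hmIcc with ⟨hm1, hmc⟩
      have ha2 : rhoStar G C z t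
          = ((c'' - 2 * (m - 1) + max (G.dist y'' t - 2) 1 : ℕ) : ℕ∞) := by
        rw [heqm, ← hc'', rhoPrime_eq, ← ENat.coe_sub, ← Nat.cast_add]
      obtain ⟨n, hn1, hnm, hnIcc, hbound⟩ := key_step (t := t) hG hsep hx hxz hm1 hmc hc''.symm
      have h5 : rhoStar G C x t ≤ ((D - 2 : ℕ) : ℕ∞) + rhoStar G C z t := by
        rw [ha2, ← Nat.cast_add]
        refine (rhoStar_le_term hxt hy''C hnIcc).trans (hbound.trans (Nat.cast_le.mpr ?_))
        omega
      have h6 : ((D - 2 : ℕ) : ℕ∞) + rhoStar G C z t < ((D - 2 : ℕ) : ℕ∞) + A :=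
        WithTop.add_lt_add_left (ENat.coe_ne_top _) hlt
      exact absurd ((h5.trans_lt h6).trans_le h7) (lt_irrefl _)
  by_cases hj3 : j = 2
  · subst hj3
    have hyz : y = z := hσlast.symm
    have hc1 : collDist G C 1 z z = 0 := by
      refine le_antisymm ?_ (zero_le)
      have hv : Valid C 1 z z (fun _ => z) :=
        ⟨rfl, rfl, fun i _ => hzC, fun a ha b hb _ => by omega⟩
      have h := collDist_le_of_valid G hv
      simpa using h
    have hAz : A = ((Rz : ℕ) : ℕ∞) := by
      rw [hA, hyz, rhoPrime_eq, ← hRzdef]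
      rw [show collDist G C (2 - 1) z z = 0 from hc1]
      simp
    have hnp : ¬ Proper G C z t := by
      intro hp
      have hp' : rhoStar G C z t < rhoPrime G z t := hp
      rw [hstar_z, hAz, hRz] at hp'
      exact lt_irrefl _ hp'
    rw [fwdNum, if_neg hnp]
  · have hj3' : 3 ≤ j := by omega
    have hproper_z : Proper G C z t := by
      by_contra hnp
      have hnp' : rhoPrime G z t ≤ rhoStar G C z t := not_lt.1 hnp
      have heqz : rhoStar G C z t = rhoPrime G z t :=
        le_antisymm (rhoStar_le_rhoPrime hzt) hnp'
      have h2mem : rhoStar G C x t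
          = collDist G C 2 x z - ((2 * (2 - 1) : ℕ) : ℕ∞) + rhoPrime G z t := by
        refine le_antisymm
          (rhoStar_le_term hxt hzC (Finset.mem_Icc.mpr ⟨by omega, by omega⟩)) ?_
        have h1 := term_le_cast (t := t) hcoll2
        rw [← hRzdef] at h1
        refine h1.trans ?_
        have hz' : ((Rz : ℕ) : ℕ∞) = ((cJ - 2 * (j - 2) + Ry : ℕ) : ℕ∞) := by
          rw [← hRz, ← heqz, hstar_z, hAeq]
        have hnat : Rz = cJ - 2 * (j - 2) + Ry := by exact_mod_cast hz'
        refine le_trans (Nat.cast_le.mpr ?_) hge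
        omega
      have := hmem_S 2 (by omega) z hzC h2mem
      omega
    rw [fwdNum, if_pos hproper_z]
    have hmemz : (j - 1) ∈ {n : ℕ | 1 ≤ n ∧ ∃ y' ∈ C, rhoStar G C z t =
        collDist G C n z y' - ((2 * (n - 1) : ℕ) : ℕ∞) + rhoPrime G y' t} := by
      refine ⟨by omega, y, hy, ?_⟩
      have e : j - 1 - 1 = j - 2 := by omega
      rw [e, hstar_z, hA]
    refine le_antisymm (Nat.sInf_le hmemz) (le_csInf ⟨_, hmemz⟩ ?_)
    rintro m ⟨hm1, y'', hy''C, heqm⟩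
    by_contra hmlt
    push_neg at hmlt
    have hfinz : rhoStar G C z t ≠ ⊤ := by rw [hstar_z, hAeq]; exact ENat.coe_ne_top _
    have hfin : collDist G C m z y'' ≠ ⊤ := by
      intro htop
      rw [htop, ENat.top_sub_coe, top_add] at heqm
      exact hfinz heqm
    obtain ⟨c'', hc''0⟩ := WithTop.ne_top_iff_exists.mp hfin
    have hc'' : (c'' : ℕ∞) = collDist G C m z y'' := hc''0
    have ha2 : rhoStar G C z t
        = ((c'' - 2 * (m - 1) + max (G.dist y'' t - 2) 1 : ℕ) : ℕ∞) := by
      rw [heqm, ← hc'', rhoPrime_eq, ← ENat.coe_sub, ← Nat.cast_add]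
    have hnat : c'' - 2 * (m - 1) + max (G.dist y'' t - 2) 1 = cJ - 2 * (j - 2) + Ry := by
      have h := ha2.symm.trans (hstar_z.trans hAeq)
      exact_mod_cast h
    obtain ⟨n, hn1, hnm, hnIcc, hbound⟩ :=
      key_step (t := t) hG hsep hx hxz hm1 (by omega) hc''.symm
    have hterm : rhoStar G C x t
        = collDist G C n x y'' - ((2 * (n - 1) : ℕ) : ℕ∞) + rhoPrime G y'' t := by
      refine le_antisymm (rhoStar_le_term hxt hy''C hnIcc) ?_
      refine hbound.trans (le_trans (Nat.cast_le.mpr ?_) hge)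
      omega
    have := hmem_S n hn1 y'' hy''C hterm
    omega



end Intercept
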